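/- Let (X, μ) be a measure space with μ a finite measure, and let w : X → ℝ be a measurable function with |w(x)| ≤ C for all x, for some constant C > 0. If μ({x | w(x) > 0}) > 0, then the integral ∫_X w(x)·log(√(w(x)² + a²) − w(x)) dμ(x) tends to −∞ as a → 0⁺. -/

import Mathlib

open Filter Real MeasureTheory

/-- If `μ` is a finite measure, `w` is measurable and bounded by `C > 0`, and the set
where `w > 0` has positive measure, then `∫ w · log (√(w² + a²) − w) dμ → −∞`
as `a → 0⁺`. -/
theorem integral_tendsto_atBot {X : Type*} [MeasurableSpace X] (μ : Measure X)
    [IsFiniteMeasure μ] (w : X → ℝ) (hw : Measurable w) (C : ℝ) (hC : 0 < C)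
    (hbound : ∀ x, |w x| ≤ C) (hpos : 0 < μ {x | 0 < w x}) :
    Tendsto (fun a : ℝ =>
        ∫ x, w x * Real.log (Real.sqrt ((w x) ^ 2 + a ^ 2) - w x) ∂μ)
      (nhdsWithin 0 (Set.Ioi 0)) atBot := by
  set S : Set X := {x | 0 < w x} with hSdef
  have hSm : MeasurableSet S := measurableSet_lt measurable_const hw
  have hwint : Integrable w μ := by
    refine (integrable_const C).mono' hw.aestronglyMeasurable ?_
    filter_upwards with x using hbound x
  have hI : 0 < ∫ x in S, w x ∂μ := by
    rw [setIntegral_pos_iff_support_of_nonneg_ae ?_ hwint.integrableOn]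
    · refine lt_of_lt_of_le hpos (measure_mono ?_)
      intro x hx
      exact ⟨ne_of_gt hx, hx⟩
    · filter_upwards [ae_restrict_mem hSm] with x hx using le_of_lt hx
  set I := ∫ x in S, w x ∂μ with hIdef
  -- uniform bounds on the argument of log
  have hbd : ∀ a : ℝ, 0 < a → ∀ x,
      a ^ 2 / (2 * (C + a)) ≤ Real.sqrt ((w x) ^ 2 + a ^ 2) - w x ∧
      Real.sqrt ((w x) ^ 2 + a ^ 2) - w x ≤ 2 * (C + a) := by
    intro a ha x
    set s := Real.sqrt ((w x) ^ 2 + a ^ 2) with hsdef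
    have hs0 : 0 ≤ s := Real.sqrt_nonneg _
    have hssq : s ^ 2 = (w x) ^ 2 + a ^ 2 := Real.sq_sqrt (by positivity)
    have hsw : |w x| < s := by
      rw [← Real.sqrt_sq_eq_abs]
      exact Real.sqrt_lt_sqrt (sq_nonneg _) (by nlinarith)
    have hsC : s ≤ C + a := by
      rw [hsdef, ← Real.sqrt_sq (by positivity : (0:ℝ) ≤ C + a)]
      refine Real.sqrt_le_sqrt ?_
      have h1 := hbound x
      have h2 := abs_nonneg (w x)
      nlinarith [sq_abs (w x)]
    have hwa := neg_abs_le (w x)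
    have hwb := le_abs_self (w x)
    have hbx := hbound x
    constructor
    · rw [div_le_iff₀ (by positivity)]
      nlinarith
    · nlinarith
  -- pointwise upper bound for small a
  have hub : ∀ a : ℝ, 0 < a → a < 1 → ∀ x,
      w x * Real.log (Real.sqrt ((w x) ^ 2 + a ^ 2) - w x) ≤
        2 * Real.log a * S.indicator w x + 1 := by
    intro a ha ha1 x
    set s := Real.sqrt ((w x) ^ 2 + a ^ 2) with hsdef
    have hs0 : 0 ≤ s := Real.sqrt_nonneg _
    have hssq : s ^ 2 = (w x) ^ 2 + a ^ 2 := Real.sq_sqrt (by positivity)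
    have hsw : |w x| < s := by
      rw [← Real.sqrt_sq_eq_abs]
      exact Real.sqrt_lt_sqrt (sq_nonneg _) (by nlinarith)
    rcases lt_or_ge 0 (w x) with hx | hx
    · -- w x > 0
      have hmem : x ∈ S := hx
      rw [Set.indicator_of_mem hmem]
      have hpos' : 0 < s - w x := by
        have := (hbd a ha x).1
        have : (0:ℝ) < a ^ 2 / (2 * (C + a)) := by positivity
        linarith [(hbd a ha x).1]
      have h1 : s - w x ≤ a ^ 2 / w x := by
        rw [le_div_iff₀ hx]
        nlinarith [abs_nonneg (w x), le_abs_self (w x)]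
      have h2 : Real.log (s - w x) ≤ Real.log (a ^ 2 / w x) :=
        Real.log_le_log hpos' h1
      have h3 : Real.log (a ^ 2 / w x) = 2 * Real.log a - Real.log (w x) := by
        rw [Real.log_div (by positivity) (ne_of_gt hx), Real.log_pow]
        push_cast
        ring
      have h4 : -Real.log (w x) ≤ (w x)⁻¹ - 1 := by
        have := Real.log_le_sub_one_of_pos (inv_pos.mpr hx)
        rwa [Real.log_inv] at this
      have h5 : w x * (w x)⁻¹ = 1 := mul_inv_cancel₀ (ne_of_gt hx)
      have h6 : w x * Real.log (s - w x) ≤ w x * (2 * Real.log a - Real.log (w x)) := by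
        exact mul_le_mul_of_nonneg_left (h3 ▸ h2) hx.le
      nlinarith [mul_le_mul_of_nonneg_left h4 hx.le]
    · -- w x ≤ 0
      have hnm : x ∉ S := by simpa [hSdef] using not_lt.mpr hx
      rw [Set.indicator_of_notMem hnm]
      rcases hx.lt_or_eq with hx' | hx'
      · -- w x < 0
        have ht : 0 < -w x := by linarith
        have hge : -2 * w x ≤ s - w x := by
          have hnw : -w x ≤ s := le_trans (neg_le_abs (w x)) hsw.le
          linarith
        have hlg : Real.log (-2 * w x) ≤ Real.log (s - w x) :=
          Real.log_le_log (by linarith) hge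
        have h6 : w x * Real.log (s - w x) ≤ w x * Real.log (-2 * w x) := by
          exact mul_le_mul_of_nonpos_left hlg hx
        have h7 : Real.log (-2 * w x) = Real.log 2 + Real.log (-w x) := by
          rw [show -2 * w x = 2 * (-w x) by ring,
            Real.log_mul (by norm_num) (ne_of_gt ht)]
        have h4 : -Real.log (-w x) ≤ (-w x)⁻¹ - 1 := by
          have := Real.log_le_sub_one_of_pos (inv_pos.mpr ht)
          rwa [Real.log_inv] at this
        have h5 : (-w x) * (-w x)⁻¹ = 1 := mul_inv_cancel₀ (ne_of_gt ht)
        have hlog2 : (0:ℝ) ≤ Real.log 2 := Real.log_nonneg (by norm_num)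
        nlinarith [mul_le_mul_of_nonneg_left h4 ht.le]
      · simp [hx']
  -- integrability for each a > 0
  have hint : ∀ a : ℝ, 0 < a →
      Integrable (fun x => w x * Real.log (Real.sqrt ((w x) ^ 2 + a ^ 2) - w x)) μ := by
    intro a ha
    have hmeas : Measurable
        (fun x => w x * Real.log (Real.sqrt ((w x) ^ 2 + a ^ 2) - w x)) :=
      hw.mul (Real.measurable_log.comp
        ((Real.continuous_sqrt.measurable.comp
          ((hw.pow_const 2).add_const (a ^ 2))).sub hw))
    refine (integrable_const
      (C * (|Real.log (a ^ 2 / (2 * (C + a)))| + |Real.log (2 * (C + a))|))).mono'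
      hmeas.aestronglyMeasurable ?_
    filter_upwards with x
    obtain ⟨h1, h2⟩ := hbd a ha x
    have hm : (0:ℝ) < a ^ 2 / (2 * (C + a)) := by positivity
    have ht : 0 < Real.sqrt ((w x) ^ 2 + a ^ 2) - w x := lt_of_lt_of_le hm h1
    rw [Real.norm_eq_abs, abs_mul]
    refine mul_le_mul (hbound x) ?_ (abs_nonneg _) hC.le
    have hl1 : Real.log (a ^ 2 / (2 * (C + a))) ≤
        Real.log (Real.sqrt ((w x) ^ 2 + a ^ 2) - w x) := Real.log_le_log hm h1
    have hl2 : Real.log (Real.sqrt ((w x) ^ 2 + a ^ 2) - w x) ≤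
        Real.log (2 * (C + a)) := Real.log_le_log ht h2
    rw [abs_le]
    constructor
    · linarith [neg_abs_le (Real.log (a ^ 2 / (2 * (C + a)))),
        abs_nonneg (Real.log (2 * (C + a)))]
    · linarith [le_abs_self (Real.log (2 * (C + a))),
        abs_nonneg (Real.log (a ^ 2 / (2 * (C + a))))]
  -- eventual comparison
  have hmono : (fun a : ℝ =>
      ∫ x, w x * Real.log (Real.sqrt ((w x) ^ 2 + a ^ 2) - w x) ∂μ) ≤ᶠ[nhdsWithin 0 (Set.Ioi 0)]
      fun a : ℝ => 2 * Real.log a * I + (μ Set.univ).toReal := by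
    filter_upwards [Ioo_mem_nhdsGT_of_mem
      (by constructor <;> norm_num : (0:ℝ) ∈ Set.Ico 0 1)] with a ha
    obtain ⟨ha0, ha1⟩ := ha
    have hind : Integrable (fun x => 2 * Real.log a * S.indicator w x + 1) μ :=
      (((hwint.indicator hSm).const_mul _).add (integrable_const 1))
    have hle := integral_mono (hint a ha0) hind (hub a ha0 ha1)
    have heq : ∫ x, (2 * Real.log a * S.indicator w x + 1) ∂μ =
        2 * Real.log a * I + (μ Set.univ).toReal := by
      rw [integral_add ((hwint.indicator hSm).const_mul _) (integrable_const 1),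
        integral_const_mul, integral_indicator hSm, integral_const]
      simp [hIdef, Measure.real]
    linarith [hle, heq.le, heq.ge]
  -- the comparison function tends to -∞
  have hfinal : Tendsto (fun a : ℝ => 2 * Real.log a * I + (μ Set.univ).toReal)
      (nhdsWithin 0 (Set.Ioi 0)) atBot := by
    apply tendsto_atBot_add_const_right
    have h2I : 0 < 2 * I := by linarith
    have := Real.tendsto_log_nhdsGT_zero.const_mul_atBot h2I
    refine this.congr fun a => by ring
  exact tendsto_atBot_mono' _ hmono hfinal
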